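/- For every k ≥ 4 and every k-chordal graph G, the graph G′ with vertex set V(G) ∪ {w_u, w_v, u, v} and edge set E(G) ∪ {u w_u, v w_v} ∪ {w_u x, w_v x : x ∈ V(G)} is k-chordal and its center is exactly V(G). -/

import Mathlib

open SimpleGraph

variable {V : Type*}

noncomputable instance (priority := low) instFintypeSubsetOfFinite [Finite V] (s : Set V) :
    Fintype ↥s := Fintype.ofFinite _

/-- Eccentricity of a vertex: max distance to any vertex. -/
noncomputable def ecc [Fintype V] (G : SimpleGraph V) (x : V) : ℕ :=
  Finset.univ.sup (G.dist x)

/-- Radius: minimum eccentricity. -/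
noncomputable def grad [Fintype V] (G : SimpleGraph V) : ℕ :=
  sInf (Set.range (ecc G))

/-- Diameter: maximum eccentricity. -/
noncomputable def gdiam [Fintype V] (G : SimpleGraph V) : ℕ :=
  Finset.univ.sup (ecc G)

/-- The center: vertices of minimum eccentricity. -/
def center [Fintype V] (G : SimpleGraph V) : Set V :=
  {x | ecc G x = grad G}

/-- `G` has an induced cycle of length `n`. -/
def HasInducedCycle (G : SimpleGraph V) (n : ℕ) : Prop :=
  3 ≤ n ∧ ∃ f : ZMod n → V, Function.Injective f ∧
    ∀ i j : ZMod n, G.Adj (f i) (f j) ↔ (i = j + 1 ∨ j = i + 1)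

/-- `G` is `k`-chordal: no induced cycle of length greater than `k`. -/
def KChordal (G : SimpleGraph V) (k : ℕ) : Prop :=
  ∀ n, k < n → ¬ HasInducedCycle G n

/-- `G` together with `w_u, u, w_v, v` (encoded as `0, 1, 2, 3`): `w_u` and `w_v` are joined
to every vertex of `G`, `u` only to `w_u`, and `v` only to `w_v`. -/
def addFour (G : SimpleGraph V) : SimpleGraph (V ⊕ Fin 4) :=
  SimpleGraph.fromRel (fun x y => match x, y with
    | Sum.inl a, Sum.inl b => G.Adj a b
    | Sum.inr i, Sum.inl _ => i = 0 ∨ i = 2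
    | Sum.inr i, Sum.inr j => (i = 0 ∧ j = 1) ∨ (i = 2 ∧ j = 3)
    | _, _ => False)

open Sum in
@[simp] lemma addFour_adj_inl_inl (G : SimpleGraph V) (a b : V) :
    (addFour G).Adj (inl a) (inl b) ↔ G.Adj a b := by
  simp only [addFour, fromRel_adj]
  constructor
  · rintro ⟨-, h | h⟩
    · exact h
    · exact h.symm
  · intro h
    exact ⟨by simp [h.ne], Or.inl h⟩

open Sum in
@[simp] lemma addFour_adj_inr_inl (G : SimpleGraph V) (i : Fin 4) (a : V) :
    (addFour G).Adj (inr i) (inl a) ↔ (i = 0 ∨ i = 2) := by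
  simp [addFour, fromRel_adj]

open Sum in
@[simp] lemma addFour_adj_inl_inr (G : SimpleGraph V) (i : Fin 4) (a : V) :
    (addFour G).Adj (inl a) (inr i) ↔ (i = 0 ∨ i = 2) := by
  rw [adj_comm]; simp

open Sum in
@[simp] lemma addFour_adj_inr_inr (G : SimpleGraph V) (i j : Fin 4) :
    (addFour G).Adj (inr i) (inr j) ↔
      ((i = 0 ∧ j = 1) ∨ (i = 2 ∧ j = 3) ∨ (i = 1 ∧ j = 0) ∨ (i = 3 ∧ j = 2)) := by
  simp only [addFour, fromRel_adj, ne_eq, Sum.inr.injEq]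
  revert i j; decide

lemma two_le_dist_aux {W : Type*} {H : SimpleGraph W} {x y : W} (hr : H.Reachable x y)
    (hne : x ≠ y) (h1 : ¬ H.Adj x y) : 2 ≤ H.dist x y := by
  by_contra h
  push_neg at h
  obtain ⟨p, hp⟩ := hr.exists_walk_length_eq_dist
  rw [← hp] at h
  cases p with
  | nil => exact hne rfl
  | cons ha q =>
    cases q with
    | nil => exact h1 ha
    | cons hb q2 => simp only [SimpleGraph.Walk.length_cons] at h; omega

lemma three_le_dist_aux {W : Type*} {H : SimpleGraph W} {x y : W} (hr : H.Reachable x y)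
    (hne : x ≠ y) (h1 : ¬ H.Adj x y)
    (h2 : ∀ z, H.Adj x z → H.Adj z y → False) : 3 ≤ H.dist x y := by
  by_contra h
  push_neg at h
  obtain ⟨p, hp⟩ := hr.exists_walk_length_eq_dist
  rw [← hp] at h
  cases p with
  | nil => exact hne rfl
  | cons ha q =>
    cases q with
    | nil => exact h1 ha
    | cons hb q2 =>
      cases q2 with
      | nil => exact h2 _ ha hb
      | cons hc q3 => simp only [SimpleGraph.Walk.length_cons] at h; omega

open Sum in
lemma addFour_connected [Nonempty V] (G : SimpleGraph V) : (addFour G).Connected := by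
  obtain ⟨a0⟩ := ‹Nonempty V›
  rw [connected_iff_exists_forall_reachable]
  refine ⟨inr 0, ?_⟩
  have h0 : ∀ b : V, (addFour G).Reachable (inr 0) (inl b) := fun b =>
    SimpleGraph.Adj.reachable (by simp)
  have a01 : (addFour G).Adj (inr 0) (inr 1) := by
    rw [addFour_adj_inr_inr]; decide
  have a23 : (addFour G).Adj (inr 2) (inr 3) := by
    rw [addFour_adj_inr_inr]; decide
  have aL2 : (addFour G).Adj (inl a0) (inr 2) := by
    rw [addFour_adj_inl_inr]; decide
  rintro (b | i)
  · exact h0 b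
  · fin_cases i
    · rfl
    · exact a01.reachable
    · exact (h0 a0).trans (aL2.reachable)
    · exact ((h0 a0).trans (aL2.reachable)).trans a23.reachable

open Sum in
lemma addFour_ecc_inl [Fintype V] [Nonempty V] (G : SimpleGraph V) (a : V) :
    ecc (addFour G) (inl a) = 2 := by
  have hconn := addFour_connected G
  have wdist2 : ∀ (x z y : V ⊕ Fin 4), (addFour G).Adj x z → (addFour G).Adj z y →
      (addFour G).dist x y ≤ 2 := by
    intro x z y h1 h2
    simpa using SimpleGraph.dist_le (Walk.cons h1 (Walk.cons h2 Walk.nil))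
  have wdist1 : ∀ (x y : V ⊕ Fin 4), (addFour G).Adj x y → (addFour G).dist x y ≤ 2 := by
    intro x y h1
    have := SimpleGraph.dist_le (Walk.cons h1 Walk.nil)
    simp at this; omega
  apply le_antisymm
  · apply Finset.sup_le
    rintro (b | i) -
    · exact wdist2 _ (inr 0) _ (by simp) (by simp)
    · fin_cases i
      · exact wdist1 _ _ (by simp)
      · exact wdist2 _ (inr 0) _ (by simp) (by rw [addFour_adj_inr_inr]; decide)
      · exact wdist1 _ _ (by simp)
      · exact wdist2 _ (inr 2) _ (by simp) (by rw [addFour_adj_inr_inr]; decide)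
  · have h2 : 2 ≤ (addFour G).dist (inl a) (inr 1) :=
      two_le_dist_aux (hconn _ _) (by simp) (by simp)
    exact le_trans h2 (Finset.le_sup (Finset.mem_univ _))

open Sum in
lemma addFour_ecc_inr [Fintype V] [Nonempty V] (G : SimpleGraph V) (i : Fin 4) :
    3 ≤ ecc (addFour G) (inr i) := by
  have hconn := addFour_connected G
  have main : ∀ s t : Fin 4, s ≠ t → ¬ (t = 0 ∨ t = 2) →
      ¬ ((s = 0 ∧ t = 1) ∨ (s = 2 ∧ t = 3) ∨ (s = 1 ∧ t = 0) ∨ (s = 3 ∧ t = 2)) →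
      (∀ z : Fin 4, ¬(((s = 0 ∧ z = 1) ∨ (s = 2 ∧ z = 3) ∨ (s = 1 ∧ z = 0) ∨ (s = 3 ∧ z = 2)) ∧
        ((z = 0 ∧ t = 1) ∨ (z = 2 ∧ t = 3) ∨ (z = 1 ∧ t = 0) ∨ (z = 3 ∧ t = 2)))) →
      3 ≤ (addFour G).dist (inr s) (inr t) := by
    intro s t hst ht hadj hmid
    apply three_le_dist_aux (hconn _ _) (by simpa using hst)
      (by rw [addFour_adj_inr_inr]; exact hadj)
    rintro (c | z) h1 h2
    · rw [addFour_adj_inl_inr] at h2; exact ht h2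
    · rw [addFour_adj_inr_inr] at h1 h2; exact hmid z ⟨h1, h2⟩
  fin_cases i
  · exact le_trans (main 0 3 (by decide) (by decide) (by decide) (by decide))
      (Finset.le_sup (Finset.mem_univ _))
  · exact le_trans (main 1 3 (by decide) (by decide) (by decide) (by decide))
      (Finset.le_sup (Finset.mem_univ _))
  · exact le_trans (main 2 1 (by decide) (by decide) (by decide) (by decide))
      (Finset.le_sup (Finset.mem_univ _))
  · exact le_trans (main 3 1 (by decide) (by decide) (by decide) (by decide))
      (Finset.le_sup (Finset.mem_univ _))

open Sum in
lemma addFour_kchordal (G : SimpleGraph V) (k : ℕ) (hk : 4 ≤ k) (hch : KChordal G k) :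
    KChordal (addFour G) k := by
  rintro n hn ⟨hn3, f, hinj, hadj⟩
  have hn5 : 5 ≤ n := by omega
  haveI : NeZero n := ⟨by omega⟩
  have hz : ∀ c : ℕ, 0 < c → c < n → ((c : ZMod n)) ≠ 0 := by
    intro c hc1 hc2 h
    have hv := ZMod.val_cast_of_lt (n := n) hc2
    rw [h, ZMod.val_zero] at hv
    omega
  have hA : ∀ i : ZMod n, f i ≠ inr 1 ∧ f i ≠ inr 3 := by
    intro i
    have ha1 : (addFour G).Adj (f i) (f (i+1)) := (hadj i (i+1)).2 (Or.inr rfl)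
    have ha2 : (addFour G).Adj (f i) (f (i-1)) := (hadj i (i-1)).2 (Or.inl (by ring))
    have hne : i + 1 ≠ i - 1 := by
      intro h
      exact hz 2 (by norm_num) (by omega) (by push_cast; linear_combination h)
    constructor <;> intro hfi <;> rw [hfi] at ha1 ha2
    · have key : ∀ y, (addFour G).Adj (inr 1) y → y = inr (0 : Fin 4) := by
        rintro (c | z) h
        · rw [addFour_adj_inr_inl] at h; exact absurd h (by decide)
        · rw [addFour_adj_inr_inr] at h
          rcases h with ⟨h,-⟩|⟨h,-⟩|⟨-,h⟩|⟨h,-⟩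
          · exact absurd h (by decide)
          · exact absurd h (by decide)
          · rw [h]
          · exact absurd h (by decide)
      exact hne (hinj ((key _ ha1).trans (key _ ha2).symm))
    · have key : ∀ y, (addFour G).Adj (inr 3) y → y = inr (2 : Fin 4) := by
        rintro (c | z) h
        · rw [addFour_adj_inr_inl] at h; exact absurd h (by decide)
        · rw [addFour_adj_inr_inr] at h
          rcases h with ⟨h,-⟩|⟨h,-⟩|⟨h,-⟩|⟨-,h⟩
          · exact absurd h (by decide)
          · exact absurd h (by decide)
          · exact absurd h (by decide)
          · rw [h]
      exact hne (hinj ((key _ ha1).trans (key _ ha2).symm))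
  have hB : ∀ i : ZMod n, ∃ a, f i = inl a := by
    intro i0
    rcases hf : f i0 with a | j
    · exact ⟨a, rfl⟩
    exfalso
    have hna : ∀ m : ℕ, 2 ≤ m → m + 1 < n →
        ¬ (addFour G).Adj (f i0) (f (i0 + (m : ZMod n))) := by
      intro m hm2 hmn hadj'
      rcases (hadj i0 (i0 + (m : ZMod n))).1 hadj' with h | h
      · refine hz (m+1) (by omega) (by omega) ?_
        push_cast
        linear_combination -h
      · refine hz (m-1) (by omega) (by omega) ?_
        rw [Nat.cast_sub (by omega), Nat.cast_one]
        linear_combination h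
    have hj1 : j ≠ 1 := by rintro rfl; exact (hA i0).1 hf
    have hj3 : j ≠ 3 := by rintro rfl; exact (hA i0).2 hf
    have hj : j = 0 ∨ j = 2 := by
      have hd : ∀ j : Fin 4, j ≠ 1 → j ≠ 3 → (j = 0 ∨ j = 2) := by decide
      exact hd j hj1 hj3
    have key : ∀ m : ℕ, 2 ≤ m → m + 1 < n →
        ∃ jm : Fin 4, f (i0 + (m : ZMod n)) = inr jm ∧ jm ≠ 1 ∧ jm ≠ 3 ∧ jm ≠ j := by
      intro m hm2 hmn
      rcases hm : f (i0 + (m : ZMod n)) with c | jm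
      · exfalso
        apply hna m hm2 hmn
        rw [hf, hm, addFour_adj_inr_inl]
        exact hj
      · refine ⟨jm, rfl, ?_, ?_, ?_⟩
        · rintro rfl; exact (hA _).1 hm
        · rintro rfl; exact (hA _).2 hm
        · rintro rfl
          have h0 : i0 + (m : ZMod n) = i0 := hinj (hm.trans hf.symm)
          exact hz m (by omega) (by omega) (by linear_combination h0)
    obtain ⟨j2, hm2, a2, b2, c2⟩ := key 2 (le_refl _) (by omega)
    obtain ⟨j3, hm3, a3, b3, c3⟩ := key 3 (by omega) (by omega)
    have hj23 : j2 = j3 := by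
      have hd : ∀ j j2 j3 : Fin 4, (j = 0 ∨ j = 2) → j2 ≠ 1 → j2 ≠ 3 → j2 ≠ j →
          j3 ≠ 1 → j3 ≠ 3 → j3 ≠ j → j2 = j3 := by decide
      exact hd j j2 j3 hj a2 b2 c2 a3 b3 c3
    have hff : f (i0 + ((2:ℕ) : ZMod n)) = f (i0 + ((3:ℕ) : ZMod n)) := by
      rw [hm2, hm3, hj23]
    have h23 := hinj hff
    refine hz 1 (by norm_num) (by omega) ?_
    push_cast at h23 ⊢
    linear_combination -h23
  choose g hg using hB
  refine hch n hn ⟨hn3, g, fun i j h => hinj (by rw [hg i, hg j, h]), fun i j => ?_⟩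
  have h := hadj i j
  rw [hg i, hg j, addFour_adj_inl_inl] at h
  exact h

theorem addFour_center [Fintype V] [Nonempty V] (G : SimpleGraph V) (k : ℕ) (hk : 4 ≤ k)
    (hch : KChordal G k) :
    KChordal (addFour G) k ∧ _root_.center (addFour G) = Set.range Sum.inl := by
  refine ⟨addFour_kchordal G k hk hch, ?_⟩
  have hgrad : grad (addFour G) = 2 := by
    obtain ⟨a0⟩ := ‹Nonempty V›
    apply le_antisymm
    · exact Nat.sInf_le ⟨Sum.inl a0, addFour_ecc_inl G a0⟩
    · apply le_csInf ⟨_, Set.mem_range_self (Sum.inl a0)⟩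
      rintro m ⟨x, rfl⟩
      rcases x with b | i
      · rw [addFour_ecc_inl]
      · have := addFour_ecc_inr G i; omega
  ext x
  rcases x with b | i
  · simp [_root_.center, hgrad, addFour_ecc_inl]
  · have h3 := addFour_ecc_inr G i
    simp only [_root_.center, hgrad, Set.mem_setOf_eq, Set.mem_range]
    constructor
    · intro h; omega
    · rintro ⟨c, hc⟩; exact absurd hc (by simp)
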